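/- Fix integers K, L ≥ 1 and let x = (x_{ij}) ∈ ℝ^{K×L} satisfy x_{ij} ≥ 0 for all i,j and ∑_{i=1}^K ∑_{j=1}^L x_{ij} = 1, with marginals x_{i·} = ∑_{j} x_{ij} and x_{·j} = ∑_{i} x_{ij}. Let s^A ∈ ℝ^{K×K} and s^B ∈ ℝ^{L×L} be arbitrary, and define the non-epistatic selection coefficients s_{ij,kl} = s^A_{ik} + s^B_{jl}. Then ∑_{i=1}^K ∑_{j=1}^L (x_{i·} x_{·j} − x_{ij}) ∑_{k=1}^K ∑_{l=1}^L s_{ij,kl} x_{kl} = 0. -/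

import Mathlib

/-- Robustness of the recombination MLE to non-epistatic selection. For a
nonnegative two-locus frequency array summing to 1 and non-epistatic selection coefficients
`s_{ij,kl} = s^A_{ik} + s^B_{jl}`,
`∑_{i,j} (x_{i·} x_{·j} − x_{ij}) ∑_{k,l} s_{ij,kl} x_{kl} = 0`. -/
theorem recombination_robust_to_nonepistatic_selection (K L : ℕ) (hK : 1 ≤ K) (hL : 1 ≤ L)
    (x : Fin K → Fin L → ℝ) (hx : ∀ i j, 0 ≤ x i j)
    (hsum : ∑ i, ∑ j, x i j = 1)
    (sA : Fin K → Fin K → ℝ) (sB : Fin L → Fin L → ℝ) :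
    ∑ i, ∑ j, ((∑ j', x i j') * (∑ i', x i' j) - x i j) *
        (∑ k, ∑ l, (sA i k + sB j l) * x k l) = 0 := by
  set A : Fin K → ℝ := fun i => ∑ j, x i j with hA
  set B : Fin L → ℝ := fun j => ∑ i, x i j with hB
  set a : Fin K → ℝ := fun i => ∑ k, sA i k * A k with ha
  set b : Fin L → ℝ := fun j => ∑ l, sB j l * B l with hb
  have hsumB : ∑ j, B j = 1 := by rw [hB]; rw [Finset.sum_comm] at hsum; exact hsum
  have hsumA : ∑ i, A i = 1 := hsum
  have hinner : ∀ i j, (∑ k, ∑ l, (sA i k + sB j l) * x k l) = a i + b j := by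
    intro i j
    have h1 : ∀ k, ∑ l, (sA i k + sB j l) * x k l
        = sA i k * A k + ∑ l, sB j l * x k l := by
      intro k
      simp only [add_mul, Finset.sum_add_distrib, hA, Finset.mul_sum]
    rw [Finset.sum_congr rfl fun k _ => h1 k, Finset.sum_add_distrib,
      Finset.sum_comm]
    congr 1
    rw [hb]
    exact Finset.sum_congr rfl fun l _ => by rw [hB, Finset.mul_sum]
  have key : ∀ i, ∑ j, (A i * B j - x i j) * (a i + b j)
      = A i * a i * (∑ j, B j) + A i * (∑ j, B j * b j) - A i * a i
        - ∑ j, x i j * b j := by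
    intro i
    have h2 : ∀ j, (A i * B j - x i j) * (a i + b j)
        = (A i * a i * B j + A i * (B j * b j)) - x i j * a i - x i j * b j :=
      fun j => by ring
    rw [Finset.sum_congr rfl fun j _ => h2 j]
    simp only [Finset.sum_sub_distrib, Finset.sum_add_distrib, ← Finset.mul_sum,
      ← Finset.sum_mul]
    rfl
  have hT : ∑ i, ∑ j, x i j * b j = ∑ j, B j * b j := by
    rw [Finset.sum_comm]
    exact Finset.sum_congr rfl fun j _ => by rw [hB, ← Finset.sum_mul]
  calc ∑ i, ∑ j, ((∑ j', x i j') * (∑ i', x i' j) - x i j) *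
        (∑ k, ∑ l, (sA i k + sB j l) * x k l)
      = ∑ i, ∑ j, (A i * B j - x i j) * (a i + b j) :=
        Finset.sum_congr rfl fun i _ => Finset.sum_congr rfl fun j _ => by
          rw [hinner i j]
    _ = ∑ i, (A i * a i * (∑ j, B j) + A i * (∑ j, B j * b j) - A i * a i
          - ∑ j, x i j * b j) := Finset.sum_congr rfl fun i _ => key i
    _ = 0 := by
        simp only [hsumB, mul_one, Finset.sum_sub_distrib, Finset.sum_add_distrib,
          ← Finset.sum_mul, hsumA, one_mul, hT]
        ring
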